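/- Let φ : ℚ[y1,y4] → ℚ[y1,y4] be the ℚ-algebra endomorphism determined by φ(y1) = k*y1 and φ(y4) = a*y1^4 + b*y4, where k, a, b ∈ ℚ. If φ(g9) ∈ I and φ(g12) ∈ I (i.e. φ maps the ideal I into itself), then a = 0 and b = k^4. (This is the rigidity computation for X = E6/D5·S1: every degree-preserving endomorphism of H*(X;ℚ) sending the Kaehlerian class y1 to k*y1 is the Adams operator ψ^k.) -/

import Mathlib

open MvPolynomial

noncomputable def dd (i j : ℕ) : Fin 2 →₀ ℕ := Finsupp.single 0 i + Finsupp.single 1 j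

@[simp] lemma dd_le (i j i' j' : ℕ) : dd i j ≤ dd i' j' ↔ i ≤ i' ∧ j ≤ j' := by
  constructor
  · intro h
    exact ⟨by simpa [dd] using h 0, by simpa [dd] using h 1⟩
  · rintro ⟨h1, h2⟩ x
    fin_cases x <;> simp [dd, h1, h2]

@[simp] lemma dd_eq (i j i' j' : ℕ) : dd i j = dd i' j' ↔ i = i' ∧ j = j' := by
  constructor
  · intro h
    exact ⟨by simpa [dd] using DFunLike.congr_fun h 0, by simpa [dd] using DFunLike.congr_fun h 1⟩
  · rintro ⟨rfl, rfl⟩; rfl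

@[simp] lemma dd_sub (i j i' j' : ℕ) : dd i' j' - dd i j = dd (i'-i) (j'-j) := by
  ext x; fin_cases x <;> simp [dd]

lemma dd_mono (i j : ℕ) (r : ℚ) :
    (monomial (dd i j) r : MvPolynomial (Fin 2) ℚ) = C r * X 0 ^ i * X 1 ^ j := by
  rw [X_pow_eq_monomial, X_pow_eq_monomial, C_mul_monomial, monomial_mul, dd]
  simp

lemma no_rat_sqrt3 (x t : ℚ) (ht : t ≠ 0) (h : x ^ 2 = 3 * t ^ 2) : False := by
  have h3 : Irrational (Real.sqrt 3) := by
    simpa using (Nat.prime_three).irrational_sqrt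
  have hr : ((x / t : ℚ) : ℝ) ^ 2 = 3 := by
    push_cast
    field_simp
    rw [mul_comm]; exact_mod_cast h
  apply h3
  refine ⟨|x / t|, ?_⟩
  have h4 : Real.sqrt 3 = Real.sqrt (((x/t : ℚ):ℝ) ^ 2) := by rw [hr]
  rw [h4, Real.sqrt_sq_eq_abs]
  push_cast
  ring

/-- Rigidity computation for `X = E₆/D₅·S¹`. -/
theorem E6_D5_rigidity (k a b : ℚ)
    (y1 y4 g9 g12 : MvPolynomial (Fin 2) ℚ)
    (hy1 : y1 = X 0) (hy4 : y4 = X 1)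
    (hg9 : g9 = 2 * y1 ^ 9 + 3 * y1 * y4 ^ 2 - 6 * y1 ^ 5 * y4)
    (hg12 : g12 = y4 ^ 3 - 6 * y1 ^ 4 * y4 ^ 2 + y1 ^ 12)
    (I : Ideal (MvPolynomial (Fin 2) ℚ)) (hI : I = Ideal.span {g9, g12})
    (φ : MvPolynomial (Fin 2) ℚ →ₐ[ℚ] MvPolynomial (Fin 2) ℚ)
    (hφ1 : φ y1 = C k * y1)
    (hφ4 : φ y4 = C a * y1 ^ 4 + C b * y4)
    (h9 : φ g9 ∈ I) (h12 : φ g12 ∈ I) :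
    a = 0 ∧ b = k ^ 4 := by
  subst hy1 hy4 hg9 hg12 hI
  have hG9 : (2 * X 0 ^ 9 + 3 * X 0 * X 1 ^ 2 - 6 * X 0 ^ 5 * X 1 : MvPolynomial (Fin 2) ℚ)
      = monomial (dd 9 0) 2 + monomial (dd 1 2) 3 - monomial (dd 5 1) 6 := by
    rw [dd_mono, dd_mono, dd_mono]
    simp only [map_ofNat, C_1]
    ring
  have hG12 : (X 1 ^ 3 - 6 * X 0 ^ 4 * X 1 ^ 2 + X 0 ^ 12 : MvPolynomial (Fin 2) ℚ)
      = monomial (dd 0 3) 1 - monomial (dd 4 2) 6 + monomial (dd 12 0) 1 := by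
    rw [dd_mono, dd_mono, dd_mono]
    simp only [map_ofNat, C_1]
    ring
  have hF9 : φ (2 * X 0 ^ 9 + 3 * X 0 * X 1 ^ 2 - 6 * X 0 ^ 5 * X 1)
      = monomial (dd 9 0) (2*k^9 - 6*k^5*a + 3*k*a^2)
        + monomial (dd 5 1) (6*k*a*b - 6*k^5*b) + monomial (dd 1 2) (3*k*b^2) := by
    simp only [map_add, map_sub, map_mul, map_pow, map_ofNat, hφ1, hφ4, dd_mono,
      C_add, C_sub, C_mul, C_pow, map_ofNat]
    ring
  have hF12 : φ (X 1 ^ 3 - 6 * X 0 ^ 4 * X 1 ^ 2 + X 0 ^ 12)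
      = monomial (dd 12 0) (a^3 - 6*k^4*a^2 + k^12)
        + monomial (dd 8 1) (3*a^2*b - 12*k^4*a*b)
        + monomial (dd 4 2) (3*a*b^2 - 6*k^4*b^2) + monomial (dd 0 3) (b^3) := by
    simp only [map_add, map_sub, map_mul, map_pow, map_ofNat, hφ1, hφ4, dd_mono,
      C_add, C_sub, C_mul, C_pow, map_ofNat]
    ring
  rw [Ideal.mem_span_pair] at h9 h12
  obtain ⟨p, q, hpq⟩ := h9
  obtain ⟨p', q', hpq'⟩ := h12
  rw [hF9] at hpq
  rw [hF12] at hpq'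
  rw [hG9, hG12] at hpq hpq'
  -- coefficient extraction
  have hA : coeff (dd 0 0) p * 2 = 2*k^9 - 6*k^5*a + 3*k*a^2 := by
    have h := congrArg (coeff (dd 9 0)) hpq
    simp only [mul_add, mul_sub, coeff_add, coeff_sub, coeff_mul_monomial', coeff_monomial,
      dd_le, dd_eq, dd_sub] at h
    norm_num at h
    linear_combination h
  have hB : -(coeff (dd 0 0) p * 6) = 6*k*a*b - 6*k^5*b := by
    have h := congrArg (coeff (dd 5 1)) hpq
    simp only [mul_add, mul_sub, coeff_add, coeff_sub, coeff_mul_monomial', coeff_monomial,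
      dd_le, dd_eq, dd_sub] at h
    norm_num at h
    linear_combination h
  have hC : coeff (dd 0 0) p * 3 = 3*k*b^2 := by
    have h := congrArg (coeff (dd 1 2)) hpq
    simp only [mul_add, mul_sub, coeff_add, coeff_sub, coeff_mul_monomial', coeff_monomial,
      dd_le, dd_eq, dd_sub] at h
    norm_num at h
    linear_combination h
  have hD : coeff (dd 0 0) q' = b^3 := by
    have h := congrArg (coeff (dd 0 3)) hpq'
    simp only [mul_add, mul_sub, coeff_add, coeff_sub, coeff_mul_monomial', coeff_monomial,
      dd_le, dd_eq, dd_sub] at h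
    norm_num at h
    linear_combination h
  have hE : coeff (dd 3 0) p' * 3 - coeff (dd 0 0) q' * 6 = 3*a*b^2 - 6*k^4*b^2 := by
    have h := congrArg (coeff (dd 4 2)) hpq'
    simp only [mul_add, mul_sub, coeff_add, coeff_sub, coeff_mul_monomial', coeff_monomial,
      dd_le, dd_eq, dd_sub] at h
    norm_num at h
    linear_combination h
  have hFe : -(coeff (dd 3 0) p' * 6) = 3*a^2*b - 12*k^4*a*b := by
    have h := congrArg (coeff (dd 8 1)) hpq'
    simp only [mul_add, mul_sub, coeff_add, coeff_sub, coeff_mul_monomial', coeff_monomial,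
      dd_le, dd_eq, dd_sub] at h
    norm_num at h
    linear_combination h
  have hGe : coeff (dd 3 0) p' * 2 + coeff (dd 0 0) q' = a^3 - 6*k^4*a^2 + k^12 := by
    have h := congrArg (coeff (dd 12 0)) hpq'
    simp only [mul_add, mul_sub, coeff_add, coeff_sub, coeff_mul_monomial', coeff_monomial,
      dd_le, dd_eq, dd_sub] at h
    norm_num at h
    linear_combination h
  clear hpq hpq' hG9 hG12 hF9 hF12 hφ1 hφ4
  set c := coeff (dd 0 0) p with hcdef
  set e := coeff (dd 3 0) p' with hedef
  set f := coeff (dd 0 0) q' with hfdef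
  by_cases hk : k = 0
  · subst hk
    have key : b * ((a+b)^2 + 3*b^2) = 0 := by
      linear_combination (-(1:ℚ)/3)*hFe + (-(2:ℚ)/3)*hE + (-(4:ℚ))*hD
    have hb : b = 0 := by
      rcases mul_eq_zero.mp key with h | h
      · exact h
      · have hb2 : b^2 = 0 := by nlinarith [sq_nonneg (a+b)]
        exact pow_eq_zero_iff (by norm_num) |>.mp hb2
    subst hb
    have ha3 : a^3 = 0 := by linear_combination -hGe + (-(1:ℚ)/3)*hFe + hD
    have ha : a = 0 := pow_eq_zero_iff (by norm_num) |>.mp ha3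
    exact ⟨ha, by norm_num⟩
  · have hfac : b * (b + a - k^4) = 0 := by
      have hk2 : k * (b * (b + a - k^4)) = 0 := by
        linear_combination (-(1:ℚ)/6)*hB + (-(1:ℚ)/3)*hC
      exact (mul_eq_zero.mp hk2).resolve_left hk
    rcases mul_eq_zero.mp hfac with hb | hab
    · subst hb
      have h2 : 2*k^8 - 6*k^4*a + 3*a^2 = 0 := by
        have hk2 : k * (2*k^8 - 6*k^4*a + 3*a^2) = 0 := by
          linear_combination (-(1:ℚ))*hA + (2/3 : ℚ)*hC
        exact (mul_eq_zero.mp hk2).resolve_left hk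
      exact (no_rat_sqrt3 (3*a - 3*k^4) (k^4) (pow_ne_zero 4 hk)
        (by linear_combination 3*h2)).elim
    · have ha : a = k^4 - b := by linarith
      subst ha
      have hbb : (b - k^4) * (b + k^4) = 0 := by
        have hk2 : k * ((b - k^4) * (b + k^4)) = 0 := by
          linear_combination (-(1:ℚ))*hA + (2/3 : ℚ)*hC
        exact (mul_eq_zero.mp hk2).resolve_left hk
      rcases mul_eq_zero.mp hbb with h1 | h2
      · have hb : b = k^4 := by linarith
        exact ⟨by linarith, hb⟩
      · have hb : b = -k^4 := by linarith
        subst hb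
        have hk12 : k^12 = 0 := by
          linear_combination (1/10 : ℚ)*hGe + (1/30 : ℚ)*hFe + (-(1:ℚ)/10)*hD
        exact absurd (pow_eq_zero_iff (by norm_num) |>.mp hk12) hk
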